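/- (Weyl's theorem) Let W be an n × p real matrix and let C = {W y : y ∈ ℝ^p, y ≥ 0} be the finitely generated convex cone spanned by the columns of W. Then C is a polyhedral cone: there exist a positive integer m and an m × n real matrix A such that C = {x ∈ ℝ^n : A x ≤ 0}. -/
import Mathlib

open Matrix Finset

/-- A set is "polyhedral" if it is `{x | A x ≤ 0}` for some matrix with fintype row index. -/
private def IsPolyCone {n : ℕ} (S : Set (Fin n → ℝ)) : Prop :=
  ∃ (ι : Type) (_ : Fintype ι) (A : Matrix ι (Fin n) ℝ), S = {x | A.mulVec x ≤ 0}

/-- Fourier–Motzkin elimination of one variable. -/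
private lemma fm_step {n : ℕ} {ι : Type} [Fintype ι] (A : Matrix ι (Fin n) ℝ)
    (w : Fin n → ℝ) :
    IsPolyCone {x : Fin n → ℝ | ∃ t : ℝ, 0 ≤ t ∧ A.mulVec (x - t • w) ≤ 0} := by
  classical
  set b : ι → ℝ := A.mulVec w with hb
  refine ⟨ι ⊕ ι × ι, inferInstance,
    Matrix.of (Sum.elim (fun i => if b i ≤ 0 then A i else 0)
      (fun q => if 0 < b q.1 ∧ b q.2 < 0 then b q.1 • A q.2 - b q.2 • A q.1 else 0)), ?_⟩
  ext x
  simp only [Set.mem_setOf_eq]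
  have hmv : ∀ (t : ℝ) (i : ι), A.mulVec (x - t • w) i = A.mulVec x i - t * b i := by
    intro t i
    simp [Matrix.mulVec_sub, Matrix.mulVec_smul, hb, Pi.sub_apply, Pi.smul_apply,
      smul_eq_mul]
  set a : ι → ℝ := A.mulVec x with ha
  have hrow1 : ∀ i : ι,
      (Matrix.of (Sum.elim (fun i : ι => if b i ≤ 0 then A i else 0)
        (fun q : ι × ι => if 0 < b q.1 ∧ b q.2 < 0 then b q.1 • A q.2 - b q.2 • A q.1 else 0))).mulVec x
        (Sum.inl i) = if b i ≤ 0 then a i else 0 := by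
    intro i
    have hr : (Matrix.of (Sum.elim (fun i : ι => if b i ≤ 0 then A i else 0)
        (fun q : ι × ι => if 0 < b q.1 ∧ b q.2 < 0 then b q.1 • A q.2 - b q.2 • A q.1 else 0))).mulVec x
        (Sum.inl i) = (if b i ≤ 0 then A i else 0) ⬝ᵥ x := rfl
    rw [hr]
    split_ifs <;> simp [ha, Matrix.mulVec]
  have hrow2 : ∀ q : ι × ι,
      (Matrix.of (Sum.elim (fun i : ι => if b i ≤ 0 then A i else 0)
        (fun q : ι × ι => if 0 < b q.1 ∧ b q.2 < 0 then b q.1 • A q.2 - b q.2 • A q.1 else 0))).mulVec x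
        (Sum.inr q) = if 0 < b q.1 ∧ b q.2 < 0 then b q.1 * a q.2 - b q.2 * a q.1 else 0 := by
    intro q
    have hr : (Matrix.of (Sum.elim (fun i : ι => if b i ≤ 0 then A i else 0)
        (fun q : ι × ι => if 0 < b q.1 ∧ b q.2 < 0 then b q.1 • A q.2 - b q.2 • A q.1 else 0))).mulVec x
        (Sum.inr q) = (if 0 < b q.1 ∧ b q.2 < 0 then b q.1 • A q.2 - b q.2 • A q.1 else 0) ⬝ᵥ x := rfl
    rw [hr]
    split_ifs <;>
      simp [ha, Matrix.mulVec, sub_dotProduct, smul_dotProduct, smul_eq_mul]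
  constructor
  · rintro ⟨t, ht, h⟩ s
    simp only [Pi.zero_apply]
    have h' : ∀ i, a i - t * b i ≤ 0 := by
      intro i; have := h i; rwa [hmv] at this
    match s with
    | Sum.inl i =>
      rw [hrow1]
      split_ifs with hbi
      · nlinarith [h' i]
      · exact le_rfl
    | Sum.inr q =>
      rw [hrow2]
      split_ifs with hq
      · nlinarith [h' q.1, h' q.2, hq.1, hq.2]
      · exact le_rfl
  · intro h
    have h1 : ∀ i, b i ≤ 0 → a i ≤ 0 := by
      intro i hbi
      have := h (Sum.inl i); rw [hrow1] at this; simp only [Pi.zero_apply] at this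
      simpa [hbi] using this
    have h2 : ∀ i j, 0 < b i → b j < 0 → b i * a j - b j * a i ≤ 0 := by
      intro i j hi hj
      have := h (Sum.inr (i, j)); rw [hrow2] at this; simp only [Pi.zero_apply] at this
      simpa [hi, hj] using this
    -- define t as max of 0 and the lower bounds a i / b i over positive b i
    set f : ι → ℝ := fun i => if 0 < b i then a i / b i else 0 with hf
    set s : Finset ℝ := insert (0 : ℝ) (Finset.univ.image f) with hs
    have hne : s.Nonempty := ⟨0, Finset.mem_insert_self _ _⟩
    set t : ℝ := s.max' hne with htdef
    have ht0 : 0 ≤ t := Finset.le_max' s 0 (Finset.mem_insert_self _ _)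
    have hft : ∀ i, f i ≤ t := fun i =>
      Finset.le_max' s (f i) (Finset.mem_insert_of_mem (Finset.mem_image_of_mem f (Finset.mem_univ i)))
    have htmem : t ∈ s := Finset.max'_mem s hne
    refine ⟨t, ht0, fun i => ?_⟩
    rw [hmv]
    simp only [Pi.zero_apply]
    rcases lt_trichotomy (b i) 0 with hbi | hbi | hbi
    · -- b i < 0 : need a i ≤ t * b i
      rcases Finset.mem_insert.mp htmem with ht' | ht'
      · have : a i ≤ 0 := h1 i hbi.le
        nlinarith
      · obtain ⟨j, _, hj⟩ := Finset.mem_image.mp ht'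
        by_cases hbj : 0 < b j
        · have hjt : t = a j / b j := by rw [← hj, hf]; simp [hbj]
          have h2' := h2 j i hbj hbi
          have hbj' : b j ≠ 0 := ne_of_gt hbj
          have : t * b j = a j := by rw [hjt]; field_simp
          nlinarith
        · have hjt : t = 0 := by rw [← hj, hf]; simp [hbj]
          have : a i ≤ 0 := h1 i hbi.le
          nlinarith
    · have : a i ≤ 0 := h1 i hbi.le
      simp [hbi]; linarith
    · have := hft i
      rw [hf] at this
      simp only [hbi, if_pos] at this
      have := (div_le_iff₀ hbi).mp this
      linarith

private lemma isPolyCone_gen (n : ℕ) :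
    ∀ (p : ℕ) (W : Matrix (Fin n) (Fin p) ℝ),
      IsPolyCone {x : Fin n → ℝ | ∃ y : Fin p → ℝ, 0 ≤ y ∧ x = W.mulVec y} := by
  intro p
  induction p with
  | zero =>
    intro W
    refine ⟨Fin n ⊕ Fin n, inferInstance,
      Matrix.of (Sum.elim (fun i => Pi.single i (1 : ℝ)) (fun i => Pi.single i (-1 : ℝ))), ?_⟩
    ext x
    simp only [Set.mem_setOf_eq]
    constructor
    · rintro ⟨y, _, rfl⟩
      have hy : W.mulVec y = 0 := by
        funext i; simp [Matrix.mulVec, dotProduct]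
      rw [hy]
      simp [Matrix.mulVec_zero, le_refl]
    · intro h
      refine ⟨0, le_rfl, ?_⟩
      have hx : x = 0 := by
        funext i
        have h1 := h (Sum.inl i)
        have h2 := h (Sum.inr i)
        simp only [Pi.zero_apply] at h1 h2
        have e1 : (Sum.elim (fun i => Pi.single i (1 : ℝ)) (fun i => Pi.single i (-1 : ℝ))
            (Sum.inl i)) ⬝ᵥ x = x i := by simp
        have e2 : (Sum.elim (fun i => Pi.single i (1 : ℝ)) (fun i => Pi.single i (-1 : ℝ))
            (Sum.inr i)) ⬝ᵥ x = -x i := by simp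
        have h1' : x i ≤ 0 := by rw [← e1]; exact h1
        have h2' : -x i ≤ 0 := by rw [← e2]; exact h2
        have : x i = 0 := le_antisymm h1' (by linarith)
        simp [this]
      rw [hx]
      funext i; simp [Matrix.mulVec, dotProduct]
  | succ q ih =>
    intro W
    set W' : Matrix (Fin n) (Fin q) ℝ := W.submatrix id Fin.castSucc with hW'
    set w : Fin n → ℝ := fun i => W i (Fin.last q) with hw
    obtain ⟨ι, hι, A, hA⟩ := ih W'
    have key : {x : Fin n → ℝ | ∃ y : Fin (q + 1) → ℝ, 0 ≤ y ∧ x = W.mulVec y}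
        = {x : Fin n → ℝ | ∃ t : ℝ, 0 ≤ t ∧ A.mulVec (x - t • w) ≤ 0} := by
      ext x
      simp only [Set.mem_setOf_eq]
      constructor
      · rintro ⟨y, hy, rfl⟩
        refine ⟨y (Fin.last q), hy (Fin.last q), ?_⟩
        have hmem : W.mulVec y - y (Fin.last q) • w
            ∈ {z : Fin n → ℝ | ∃ y' : Fin q → ℝ, 0 ≤ y' ∧ z = W'.mulVec y'} := by
          refine ⟨fun j => y (Fin.castSucc j), fun j => hy _, ?_⟩
          funext i
          simp only [Pi.sub_apply, Pi.smul_apply, smul_eq_mul, hw, hW']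
          simp [Matrix.mulVec, dotProduct, Fin.sum_univ_castSucc]
          ring
        rw [hA] at hmem
        exact hmem
      · rintro ⟨t, ht, hAx⟩
        have hmem : x - t • w ∈ {z : Fin n → ℝ | ∃ y' : Fin q → ℝ, 0 ≤ y' ∧ z = W'.mulVec y'} := by
          rw [hA]; exact hAx
        obtain ⟨y', hy', hx'⟩ := hmem
        refine ⟨Fin.snoc y' t, ?_, ?_⟩
        · intro j
          refine Fin.lastCases ?_ ?_ j
          · simpa using ht
          · intro k; simpa using hy' k
        · have : x = W'.mulVec y' + t • w := by
            rw [← hx']; abel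
          rw [this]
          funext i
          simp only [Pi.add_apply, Pi.smul_apply, smul_eq_mul, hw, hW']
          simp [Matrix.mulVec, dotProduct, Fin.sum_univ_castSucc]
          ring
    rw [key]
    exact fm_step A w

theorem weyl_finitely_generated_cone_is_polyhedral
    (n p : ℕ) (W : Matrix (Fin n) (Fin p) ℝ) :
    ∃ (m : ℕ) (_ : 0 < m) (A : Matrix (Fin m) (Fin n) ℝ),
      {x : Fin n → ℝ | ∃ y : Fin p → ℝ, 0 ≤ y ∧ x = W.mulVec y}
        = {x : Fin n → ℝ | A.mulVec x ≤ 0} := by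
  classical
  obtain ⟨ι, hι, A, hA⟩ := isPolyCone_gen n p W
  set m : ℕ := @Fintype.card ι hι + 1 with hm
  have e : Fin (@Fintype.card ι hι) ≃ ι := (@Fintype.equivFin ι hι).symm
  refine ⟨m, Nat.succ_pos _,
    Matrix.of (fun k : Fin m => if h : (k : ℕ) < @Fintype.card ι hι then A (e ⟨k, h⟩) else 0), ?_⟩
  rw [hA]
  ext x
  simp only [Set.mem_setOf_eq]
  have hrow : ∀ k : Fin m,
      (Matrix.of (fun k : Fin m =>
        if h : (k : ℕ) < @Fintype.card ι hι then A (e ⟨k, h⟩) else 0)).mulVec x k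
      = if h : (k : ℕ) < @Fintype.card ι hι then A.mulVec x (e ⟨k, h⟩) else 0 := by
    intro k
    show (if h : (k : ℕ) < @Fintype.card ι hι then A (e ⟨k, h⟩) else 0) ⬝ᵥ x = _
    split_ifs <;> simp [Matrix.mulVec]
  constructor
  · intro h k
    rw [hrow]
    split_ifs with hk
    · exact h _
    · exact le_rfl
  · intro h i
    have hk : ((e.symm i : Fin (@Fintype.card ι hι)) : ℕ) < @Fintype.card ι hι :=
      (e.symm i).isLt
    have := h ⟨(e.symm i : ℕ), Nat.lt_succ_of_lt hk⟩
    rw [hrow] at this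
    simp only [hk, dif_pos] at this
    have he : e ⟨(e.symm i : ℕ), hk⟩ = i := by
      have : (⟨(e.symm i : ℕ), hk⟩ : Fin (@Fintype.card ι hι)) = e.symm i := by
        ext; rfl
      rw [this, Equiv.apply_symm_apply]
    rwa [he] at this
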